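/- arXiv:1703.06054 — 5 statements merged into one kernel-verified Lean document; each statement's English description precedes it below -/
import Mathlib

section
/- Let ξ be a nonnegative real random variable whose law has density f, let t > 0 be such that 0 < F(t) < ∞, and let φ : [0,∞) → ℝ be a Borel function such that φ(ξ) is square-integrable and φ(ξ + t) is integrable. Then Var{φ(ξ)} ≥ (E{φ(ξ)} − E{φ(ξ + t)})² / F(t). -/
open MeasureTheory ProbabilityTheory
open scoped ENNReal

private lemma l2_mul_integrable {ν : Measure ℝ} [IsProbabilityMeasure ν] {a b : ℝ → ℝ}
    (ha : MemLp a 2 ν) (hb : MemLp b 2 ν) : Integrable (fun v => a v * b v) ν := by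
  rw [← memLp_one_iff_integrable]
  have h2 : (1 : ℝ≥0∞)/1 = 1/2 + 1/2 := by
    rw [ENNReal.div_add_div_same, one_div_one, one_add_one_eq_two,
      ENNReal.div_self two_ne_zero ENNReal.ofNat_ne_top]
  have := ha.smul (φ := b) (p := 2) (r := 1) hb
  have e : (b • a) = fun v => a v * b v := by funext v; simp [smul_eq_mul, mul_comm]
  rwa [e] at this

/-- Hammersley–Chapman–Robbins type inequality (Lemma 1 of the paper):
if the law of the nonnegative random variable `ξ` has a bounded density `f`
supported on `[0,∞)`, `t > 0` is such that `0 < F(t) < ∞` where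
`F(t) = ∫₀^∞ f(v-t)²/f(v) dv - 1`, and `φ` is a Borel function with
`φ(ξ)` square-integrable and `φ(ξ+t)` integrable, then
`Var{φ(ξ)} ≥ (E{φ(ξ)} − E{φ(ξ+t)})² / F(t)`. -/
theorem stmt_0
    {Ω : Type*} [MeasurableSpace Ω] (μ : Measure Ω) [IsProbabilityMeasure μ]
    (ξ : Ω → ℝ) (hξ : Measurable ξ) (hξ_nonneg : ∀ ω, 0 ≤ ξ ω)
    (f : ℝ → ℝ) (hf_meas : Measurable f) (hf_bdd : ∃ C : ℝ, ∀ v, f v ≤ C)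
    (hf_pos : ∀ v : ℝ, 0 ≤ v → 0 < f v) (hf_zero : ∀ v : ℝ, v < 0 → f v = 0)
    (hf_norm : ∫ v in Set.Ioi (0 : ℝ), f v = 1)
    (hlaw : Measure.map ξ μ = volume.withDensity fun v => ENNReal.ofReal (f v))
    (t : ℝ) (ht : 0 < t)
    (F : ℝ≥0∞)
    (hF : F = (∫⁻ v in Set.Ioi (0 : ℝ), ENNReal.ofReal ((f (v - t)) ^ 2 / f v)) - 1)
    (hF_pos : 0 < F) (hF_fin : F < ∞)
    (φ : ℝ → ℝ) (hφ : Measurable φ)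
    (hφ_sq : MemLp (fun ω => φ (ξ ω)) 2 μ)
    (hφ_t : Integrable (fun ω => φ (ξ ω + t)) μ) :
    variance (fun ω => φ (ξ ω)) μ ≥
      ((∫ ω, φ (ξ ω) ∂μ) - ∫ ω, φ (ξ ω + t) ∂μ) ^ 2 / F.toReal := by
  set ν : Measure ℝ := volume.withDensity (fun v => ENNReal.ofReal (f v)) with hν_def
  have hmap : Measure.map ξ μ = ν := hlaw
  haveI hνprob : IsProbabilityMeasure ν := hmap ▸ Measure.isProbabilityMeasure_map hξ.aemeasurable
  have hf_nonneg : ∀ v, 0 ≤ f v := by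
    intro v
    rcases lt_or_ge v 0 with h | h
    · exact (hf_zero v h).ge
    · exact (hf_pos v h).le
  -- f vanishes iff v < 0
  have key : ∀ v, f v = 0 → v < 0 := by
    intro v hv
    by_contra h'
    exact (hf_pos v (le_of_not_gt h')).ne' hv
  -- f integrable with total mass 1
  have hf_int_Ioi : IntegrableOn f (Set.Ioi 0) := by
    by_contra h
    rw [integral_undef h] at hf_norm
    norm_num at hf_norm
  have h_ind : f =ᵐ[volume] (Set.Ioi (0:ℝ)).indicator f := by
    rw [Filter.eventuallyEq_iff_exists_mem]
    refine ⟨{0}ᶜ, ?_, ?_⟩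
    · rw [mem_ae_iff, compl_compl]; exact Real.volume_singleton
    · intro v hv
      rcases lt_trichotomy v 0 with h | h | h
      · simp [Set.indicator_of_notMem, h.not_gt, hf_zero v h]
      · exact absurd h hv
      · simp [Set.indicator_of_mem, h]
  have hf_int : Integrable f := ((integrable_indicator_iff measurableSet_Ioi).2 hf_int_Ioi).congr h_ind.symm
  have hf_tot : ∫ v, f v = 1 := by
    rw [integral_congr_ae h_ind, integral_indicator measurableSet_Ioi]
    exact hf_norm
  -- shifted density g(v) = f(v - t)
  have hg_int : Integrable (fun v => f (v - t)) := hf_int.comp_sub_right t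
  have hg_tot : ∫ v, f (v - t) = 1 := by
    rw [integral_sub_right_eq_self f t]; exact hf_tot
  -- the quotient q(v) = f(v-t)^2 / f(v)
  set q : ℝ → ℝ := fun v => f (v - t) ^ 2 / f v with hq_def
  have hq_meas : Measurable q := ((hf_meas.comp (measurable_id.sub_const t)).pow_const 2).div hf_meas
  have hq_nonneg : ∀ v, 0 ≤ q v := fun v => div_nonneg (sq_nonneg _) (hf_nonneg v)
  have hq_zero : ∀ v ≤ 0, q v = 0 := by
    intro v hv
    have : f (v - t) = 0 := hf_zero _ (by linarith)
    simp [hq_def, this]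
  -- total lintegral of q equals F + 1
  have hJ : ∫⁻ v, ENNReal.ofReal (q v) = F + 1 := by
    have hsplit := lintegral_add_compl (μ := volume) (fun v => ENNReal.ofReal (q v)) (measurableSet_Ioi (a := (0:ℝ)))
    have hIic : ∫⁻ v in (Set.Ioi (0:ℝ))ᶜ, ENNReal.ofReal (q v) = 0 := by
      rw [Set.compl_Ioi]
      rw [setLIntegral_congr_fun measurableSet_Iic
        (fun v hv => by rw [hq_zero v hv, ENNReal.ofReal_zero])]
      simp
    have hJ1 : (1 : ℝ≥0∞) ≤ ∫⁻ v in Set.Ioi (0:ℝ), ENNReal.ofReal (q v) := by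
      by_contra hlt
      push_neg at hlt
      rw [hF, tsub_eq_zero_of_le hlt.le] at hF_pos
      exact lt_irrefl 0 hF_pos
    rw [← hsplit, hIic, add_zero, hF, tsub_add_cancel_of_le hJ1]
  have hJ_fin : ∫⁻ v, ENNReal.ofReal (q v) ≠ ∞ := by
    rw [hJ]; exact (ENNReal.add_lt_top.2 ⟨hF_fin, ENNReal.one_lt_top⟩).ne
  have hq_int : Integrable q := by
    refine ⟨hq_meas.aestronglyMeasurable, ?_⟩
    rw [hasFiniteIntegral_iff_ofReal (ae_of_all _ hq_nonneg)]
    exact hJ_fin.lt_top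
  have hq_tot : ∫ v, q v = F.toReal + 1 := by
    rw [integral_eq_lintegral_of_nonneg_ae (ae_of_all _ hq_nonneg) hq_meas.aestronglyMeasurable,
      hJ, ENNReal.toReal_add hF_fin.ne ENNReal.one_ne_top, ENNReal.toReal_one]
  -- transfer between ν and Lebesgue
  have hIν : ∀ g : ℝ → ℝ, ∫ v, g v ∂ν = ∫ v, g v * f v := by
    intro g
    have : ν = volume.withDensity (fun v => ((f v).toNNReal : ℝ≥0∞)) := rfl
    rw [this, integral_withDensity_eq_integral_smul hf_meas.real_toNNReal g]
    refine integral_congr_ae (ae_of_all _ fun v => ?_)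
    simp [NNReal.smul_def, Real.coe_toNNReal _ (hf_nonneg v), mul_comm]
  have hInt_iff : ∀ g : ℝ → ℝ, Integrable g ν ↔ Integrable (fun v => g v * f v) volume := by
    intro g
    rw [hν_def, integrable_withDensity_iff hf_meas.ennreal_ofReal
      (ae_of_all _ fun v => ENNReal.ofReal_lt_top)]
    have e : (fun x => g x * (ENNReal.ofReal (f x)).toReal) = fun x => g x * f x := by
      funext x; rw [ENNReal.toReal_ofReal (hf_nonneg x)]
    rw [e]
  -- the score function h
  set h : ℝ → ℝ := fun v => 1 - f (v - t) / f v with hh_def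
  have h_meas : Measurable h := measurable_const.sub ((hf_meas.comp (measurable_id.sub_const t)).div hf_meas)
  have id1 : ∀ v, h v * f v = f v - f (v - t) := by
    intro v
    by_cases hv : f v = 0
    · have h2 : f (v - t) = 0 := hf_zero _ (by linarith [key v hv])
      simp [hh_def, hv, h2]
    · simp only [hh_def]; field_simp
  have id2 : ∀ v, h v ^ 2 * f v = f v - 2 * f (v - t) + q v := by
    intro v
    by_cases hv : f v = 0
    · have h2 : f (v - t) = 0 := hf_zero _ (by linarith [key v hv])
      simp [hh_def, hq_def, hv, h2]
    · simp only [hh_def, hq_def]; field_simp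
      ring
  -- integrals of h against ν
  have hIh : ∫ v, h v ∂ν = 0 := by
    rw [hIν h]
    calc ∫ v, h v * f v = ∫ v, (f v - f (v - t)) := by simp only [id1]
    _ = (∫ v, f v) - ∫ v, f (v - t) := integral_sub hf_int hg_int
    _ = 0 := by rw [hf_tot, hg_tot]; ring
  have Ih2ν : Integrable (fun v => h v ^ 2) ν := by
    rw [hInt_iff]
    refine (((hf_int.sub (hg_int.const_mul 2)).add hq_int).congr (ae_of_all _ fun v => ?_))
    exact (id2 v).symm
  have hIh2 : ∫ v, h v ^ 2 ∂ν = F.toReal := by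
    rw [hIν (fun v => h v ^ 2)]
    calc ∫ v, h v ^ 2 * f v = ∫ v, (f v - 2 * f (v - t) + q v) := by simp only [id2]
    _ = ((∫ v, f v) - ∫ v, 2 * f (v - t)) + ∫ v, q v := by
        have I1 : Integrable (fun v => f v - 2 * f (v - t)) volume := hf_int.sub (hg_int.const_mul 2)
        have e1' : ∫ v, (f v - 2 * f (v - t) + q v) = (∫ v, (f v - 2 * f (v - t))) + ∫ v, q v :=
          integral_add I1 hq_int
        have e2' : ∫ v, (f v - 2 * f (v - t)) = (∫ v, f v) - ∫ v, 2 * f (v - t) :=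
          integral_sub hf_int (hg_int.const_mul 2)
        rw [e1', e2']
    _ = F.toReal := by
        rw [hf_tot, hq_tot, integral_const_mul, hg_tot]; ring
  have hhν : MemLp h 2 ν := (memLp_two_iff_integrable_sq h_meas.aestronglyMeasurable).2 Ih2ν
  have Ih1ν : Integrable h ν := hhν.integrable one_le_two
  -- transfer φ facts to ν
  have hφν : MemLp φ 2 ν := by
    rw [← hmap]
    exact (memLp_map_measure_iff hφ.aestronglyMeasurable hξ.aemeasurable).2 hφ_sq
  have hφ1ν : Integrable φ ν := hφν.integrable one_le_two
  have hφtν : Integrable (fun v => φ (v + t)) ν := by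
    rw [← hmap]
    exact (integrable_map_measure (hφ.comp (measurable_id.add_const t)).aestronglyMeasurable
      hξ.aemeasurable).2 hφ_t
  set m : ℝ := ∫ v, φ v ∂ν with hm_def
  set m2 : ℝ := ∫ v, φ (v + t) ∂ν with hm2_def
  have e1 : ∫ ω, φ (ξ ω) ∂μ = m := by
    rw [hm_def, ← hmap, integral_map hξ.aemeasurable hφ.aestronglyMeasurable]
  have e2 : ∫ ω, φ (ξ ω + t) ∂μ = m2 := by
    rw [hm2_def, ← hmap]
    exact (integral_map (f := fun v => φ (v + t)) hξ.aemeasurable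
      (hφ.comp (measurable_id.add_const t)).aestronglyMeasurable).symm
  -- key identity : ∫ φ h dν = m - m2
  have hφf_int : Integrable (fun v => φ v * f v) := (hInt_iff φ).1 hφ1ν
  have hφtf_int : Integrable (fun v => φ (v + t) * f v) := (hInt_iff _).1 hφtν
  have hφg_int : Integrable (fun v => φ v * f (v - t)) := by
    have := hφtf_int.comp_sub_right t
    simpa [sub_add_cancel] using this
  have eφg : ∫ v, φ v * f (v - t) = m2 := by
    have h1 := integral_add_right_eq_self (μ := volume) (fun v => φ v * f (v - t)) t
    simp only [add_sub_cancel_right] at h1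
    rw [← h1, hm2_def, hIν (fun v => φ (v + t))]
  have id3 : ∀ v, φ v * h v * f v = φ v * f v - φ v * f (v - t) := by
    intro v
    rw [mul_assoc, id1 v]
    ring
  have hφhν : Integrable (fun v => φ v * h v) ν := l2_mul_integrable hφν hhν
  have hIφh : ∫ v, φ v * h v ∂ν = m - m2 := by
    rw [hIν (fun v => φ v * h v)]
    calc ∫ v, φ v * h v * f v = ∫ v, (φ v * f v - φ v * f (v - t)) := by simp only [id3]
    _ = (∫ v, φ v * f v) - ∫ v, φ v * f (v - t) := integral_sub hφf_int hφg_int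
    _ = m - m2 := by rw [eφg, hm_def, hIν φ]
  -- centered variable
  set ψ : ℝ → ℝ := fun v => φ v - m with hψ_def
  have hψν : MemLp ψ 2 ν := hφν.sub (memLp_const m)
  have Iψ2 : Integrable (fun v => ψ v ^ 2) ν :=
    (memLp_two_iff_integrable_sq hψν.aestronglyMeasurable).1 hψν
  have Iψh : Integrable (fun v => ψ v * h v) ν := l2_mul_integrable hψν hhν
  have hIψh : ∫ v, ψ v * h v ∂ν = m - m2 := by
    have expand : ∀ v, ψ v * h v = φ v * h v - m * h v := fun v => by rw [hψ_def]; ring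
    calc ∫ v, ψ v * h v ∂ν = ∫ v, (φ v * h v - m * h v) ∂ν := by simp only [expand]
    _ = (∫ v, φ v * h v ∂ν) - ∫ v, m * h v ∂ν := integral_sub hφhν (Ih1ν.const_mul m)
    _ = m - m2 := by rw [hIφh, integral_const_mul, hIh, mul_zero, sub_zero]
  -- Cauchy-Schwarz via quadratic discriminant
  set A : ℝ := ∫ v, ψ v ^ 2 ∂ν with hA_def
  have quad : ∀ x : ℝ, 0 ≤ F.toReal * (x * x) + (2 * (m - m2)) * x + A := by
    intro x
    have nn : 0 ≤ ∫ v, (ψ v + x * h v) ^ 2 ∂ν := integral_nonneg fun v => sq_nonneg _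
    have expand : ∀ v, (ψ v + x * h v) ^ 2
        = ψ v ^ 2 + (2 * x) * (ψ v * h v) + (x * x) * h v ^ 2 := fun v => by ring
    have : ∫ v, (ψ v + x * h v) ^ 2 ∂ν
        = A + (2 * x) * (m - m2) + (x * x) * F.toReal := by
      calc ∫ v, (ψ v + x * h v) ^ 2 ∂ν
          = ∫ v, (ψ v ^ 2 + (2 * x) * (ψ v * h v) + (x * x) * h v ^ 2) ∂ν := by
            simp only [expand]
      _ = ((∫ v, ψ v ^ 2 ∂ν) + ∫ v, (2 * x) * (ψ v * h v) ∂ν) + ∫ v, (x * x) * h v ^ 2 ∂ν := by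
            have i1 : Integrable (fun v => ψ v ^ 2 + (2 * x) * (ψ v * h v)) ν :=
              Iψ2.add (Iψh.const_mul _)
            have ea : ∫ v, (ψ v ^ 2 + (2 * x) * (ψ v * h v) + (x * x) * h v ^ 2) ∂ν
                = (∫ v, (ψ v ^ 2 + (2 * x) * (ψ v * h v)) ∂ν) + ∫ v, (x * x) * h v ^ 2 ∂ν :=
              integral_add i1 (Ih2ν.const_mul _)
            have eb : ∫ v, (ψ v ^ 2 + (2 * x) * (ψ v * h v)) ∂ν
                = (∫ v, ψ v ^ 2 ∂ν) + ∫ v, (2 * x) * (ψ v * h v) ∂ν :=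
              integral_add Iψ2 (Iψh.const_mul _)
            rw [ea, eb]
      _ = A + (2 * x) * (m - m2) + (x * x) * F.toReal := by
            rw [integral_const_mul, integral_const_mul, hIψh, hIh2, hA_def]
    linarith [nn.trans_eq this]
  have disc := discrim_le_zero quad
  rw [discrim] at disc
  have CS : (m - m2) ^ 2 ≤ A * F.toReal := by nlinarith [disc]
  -- variance equals A
  have hvar : variance (fun ω => φ (ξ ω)) μ = A := by
    rw [variance_eq_integral (X := fun ω => φ (ξ ω)) (hφ.comp hξ).aemeasurable]
    change ∫ ω, ((((fun ω => φ (ξ ω)) - fun _ => ∫ ω, φ (ξ ω) ∂μ) ^ (2 : ℕ) : Ω → ℝ)) ω ∂μ = A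
    have h1 : ((fun ω => φ (ξ ω)) - fun _ => ∫ ω, φ (ξ ω) ∂μ) ^ (2 : ℕ)
        = fun ω => ψ (ξ ω) ^ 2 := by
      funext ω
      simp [hψ_def, e1]
    rw [h1]
    have h2 : ∫ v, ψ v ^ 2 ∂ν = ∫ ω, ψ (ξ ω) ^ 2 ∂μ := by
      rw [← hmap]
      exact integral_map (f := fun v => ψ v ^ 2) hξ.aemeasurable
        (((hφ.sub measurable_const).pow_const 2).aestronglyMeasurable)
    rw [hA_def, h2]
  -- conclude
  rw [ge_iff_le, e1, e2, hvar, div_le_iff₀ (ENNReal.toReal_pos hF_pos.ne' hF_fin.ne)]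
  exact CS
end

section
/- J(t) tends to infinity as t → ∞: for every K > 0 there exists t₀ > 0 such that J(t) ≥ K (in [0,∞]) for all t ≥ t₀. -/
open MeasureTheory
open scoped ENNReal

/-- If `F` vanishes below `c`, the lintegral over `Ioi c` equals the full lintegral. -/
lemma lintegral_Ioi_eq_full (F : ℝ → ℝ≥0∞) (c : ℝ) (hF : ∀ v, v < c → F v = 0) :
    ∫⁻ v in Set.Ioi c, F v = ∫⁻ v, F v := by
  have h2 : ∫⁻ v in Set.Iio c, F v = 0 := by
    rw [setLIntegral_congr_fun measurableSet_Iio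
      (fun v hv => hF v hv)]
    simp
  have h1 : ∫⁻ v in Set.Iic c, F v = 0 := by
    rw [← setLIntegral_congr (μ := volume) (f := F) Iio_ae_eq_Iic, h2]
  have h3 := lintegral_add_compl (μ := volume) F (measurableSet_Ioi (a := c))
  rw [Set.compl_Ioi, h1, add_zero] at h3
  exact h3

/-- For a probability density `f` supported on `[0,∞)`,
`J(t) = ∫₀^∞ f(v-t)²/f(v) dv` tends to infinity as `t → ∞`: for every `K > 0`
there exists `t₀ > 0` such that `J(t) ≥ K` (in `[0,∞]`) for all `t ≥ t₀`. -/
theorem stmt_4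
    (f : ℝ → ℝ) (hf_meas : Measurable f)
    (hf_pos : ∀ v : ℝ, 0 ≤ v → 0 < f v) (hf_zero : ∀ v : ℝ, v < 0 → f v = 0)
    (hf_norm : ∫ v in Set.Ioi (0 : ℝ), f v = 1) :
    ∀ K : ℝ, 0 < K → ∃ t₀ : ℝ, 0 < t₀ ∧ ∀ t : ℝ, t₀ ≤ t →
      ENNReal.ofReal K ≤ ∫⁻ v in Set.Ioi (0 : ℝ), ENNReal.ofReal ((f (v - t)) ^ 2 / f v) := by
  intro K hK
  set h : ℝ → ℝ≥0∞ := fun v => ENNReal.ofReal (f v) with hh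
  have hhm : Measurable h := hf_meas.ennreal_ofReal
  have hf_nn : ∀ v, 0 ≤ f v := fun v => by
    rcases lt_or_ge v 0 with hv | hv
    · exact (hf_zero v hv).ge
    · exact (hf_pos v hv).le
  have hint : Integrable f (volume.restrict (Set.Ioi (0:ℝ))) := by
    by_contra hc
    rw [integral_undef hc] at hf_norm; norm_num at hf_norm
  have h_one : ∫⁻ v in Set.Ioi (0:ℝ), h v = 1 := by
    rw [hh, ← ofReal_integral_eq_lintegral_ofReal hint
      (Filter.Eventually.of_forall fun v => hf_nn v), hf_norm, ENNReal.ofReal_one]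
  have h_full : ∫⁻ v, h v = 1 := by
    rw [← lintegral_Ioi_eq_full h 0 (fun v hv => by simp [hh, hf_zero v hv]), h_one]
  -- the tail integral tends to 0
  set c : ℝ≥0∞ := ENNReal.ofReal K with hc
  have hc0 : c ≠ 0 := by simp [hc, hK]
  have hctop : c ≠ ⊤ := ENNReal.ofReal_ne_top
  have htail : Filter.Tendsto (fun t : ℝ => ∫⁻ v in Set.Ioi t, h v)
      Filter.atTop (nhds 0) := by
    have hμ : ∀ t : ℝ, (volume.withDensity h) (Set.Ioi t) = ∫⁻ v in Set.Ioi t, h v :=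
      fun t => withDensity_apply h measurableSet_Ioi
    have hiInter : (⋂ t : ℝ, Set.Ioi t) = ∅ := by
      ext x
      simp only [Set.mem_iInter, Set.mem_Ioi, Set.mem_empty_iff_false, iff_false, not_forall,
        not_lt]
      exact ⟨x, le_rfl⟩
    have H := tendsto_measure_iInter_atTop (μ := volume.withDensity h)
      (s := fun t : ℝ => Set.Ioi t)
      (fun t => measurableSet_Ioi.nullMeasurableSet)
      (fun a b hab => Set.Ioi_subset_Ioi hab)
      ⟨0, by rw [hμ 0, h_one]; exact ENNReal.one_ne_top⟩
    rw [hiInter] at H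
    simpa only [Function.comp_def, hμ, measure_empty] using H
  obtain ⟨t₁, ht₁⟩ := Filter.eventually_atTop.1
    (htail.eventually_le_const (show (0:ℝ≥0∞) < c⁻¹ by simp [ENNReal.inv_pos, hctop]))
  refine ⟨max t₁ 1, lt_of_lt_of_le zero_lt_one (le_max_right _ _), fun t ht => ?_⟩
  have htpos : (0:ℝ) < t := lt_of_lt_of_le zero_lt_one (le_trans (le_max_right _ _) ht)
  have htail_t : ∫⁻ v in Set.Ioi t, h v ≤ c⁻¹ := ht₁ t (le_trans (le_max_left _ _) ht)
  -- the shifted density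
  set g : ℝ → ℝ≥0∞ := fun v => ENNReal.ofReal (f (v - t)) with hg
  have hgm : Measurable g := (hf_meas.comp (measurable_id.sub_const t)).ennreal_ofReal
  have hg_one : ∫⁻ v in Set.Ioi t, g v = 1 := by
    rw [lintegral_Ioi_eq_full g t (fun v hv => by simp [hg, hf_zero (v - t) (by linarith)])]
    rw [hg, lintegral_sub_right_eq_self (μ := volume) (fun v => ENNReal.ofReal (f v)) t]
    exact h_full
  -- Hölder's inequality on `Ioi t`
  set a : ℝ → ℝ≥0∞ := fun v => g v / (h v) ^ ((1:ℝ)/2) with ha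
  set b : ℝ → ℝ≥0∞ := fun v => (h v) ^ ((1:ℝ)/2) with hb
  have hbm : Measurable b := ENNReal.continuous_rpow_const.measurable.comp hhm
  have ham : Measurable a := hgm.div hbm
  have hconj : Real.HolderConjugate 2 2 := ⟨by norm_num, by norm_num, by norm_num⟩
  have Hol := ENNReal.lintegral_mul_le_Lp_mul_Lq (volume.restrict (Set.Ioi t)) hconj
    ham.aemeasurable hbm.aemeasurable
  -- on `Ioi t` we have `a * b = g`
  have hh_ne : ∀ v : ℝ, t < v → h v ≠ 0 ∧ h v ≠ ⊤ := fun v hv =>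
    ⟨ne_of_gt (ENNReal.ofReal_pos.2 (hf_pos v (le_of_lt (lt_trans htpos hv)))), ENNReal.ofReal_ne_top⟩
  have hab : ∫⁻ v in Set.Ioi t, (a * b) v = 1 := by
    rw [← hg_one]
    refine setLIntegral_congr_fun measurableSet_Ioi
      (fun v hv => ?_)
    obtain ⟨h0, htop⟩ := hh_ne v hv
    have hb0 : (h v) ^ ((1:ℝ)/2) ≠ 0 := by
      simp [ENNReal.rpow_eq_zero_iff, h0, htop]
    have hbt : (h v) ^ ((1:ℝ)/2) ≠ ⊤ := by
      simp [ENNReal.rpow_eq_top_iff, h0, htop]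
    simp only [Pi.mul_apply, ha, hb]
    exact ENNReal.div_mul_cancel hb0 hbt
  -- identify the squares
  have hb_sq : ∫⁻ v in Set.Ioi t, b v ^ (2:ℝ) = ∫⁻ v in Set.Ioi t, h v := by
    refine setLIntegral_congr_fun measurableSet_Ioi
      (fun v _ => ?_)
    rw [hb, ← ENNReal.rpow_mul]
    norm_num
  have ha_sq : ∫⁻ v in Set.Ioi t, a v ^ (2:ℝ)
      = ∫⁻ v in Set.Ioi t, ENNReal.ofReal ((f (v - t)) ^ 2 / f v) := by
    refine setLIntegral_congr_fun measurableSet_Ioi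
      (fun v hv => ?_)
    have hfv : 0 < f v := hf_pos v (le_of_lt (lt_trans htpos (Set.mem_Ioi.1 hv)))
    rw [ENNReal.ofReal_div_of_pos hfv, ENNReal.ofReal_pow (hf_nn _)]
    simp only [ha, hb, hg, hh]
    rw [ENNReal.div_rpow_of_nonneg _ _ (by norm_num : (0:ℝ) ≤ 2), ← ENNReal.rpow_mul,
      show ((1:ℝ)/2 * 2 = 1) by norm_num, ENNReal.rpow_one,
      show ((2:ℝ) = ((2:ℕ):ℝ)) by norm_num, ENNReal.rpow_natCast]
  -- put it all together
  set A : ℝ≥0∞ := ∫⁻ v in Set.Ioi t, ENNReal.ofReal ((f (v - t)) ^ 2 / f v) with hA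
  have key : (1:ℝ≥0∞) ≤ A ^ ((1:ℝ)/2) * (c⁻¹) ^ ((1:ℝ)/2) := by
    calc (1:ℝ≥0∞) = ∫⁻ v in Set.Ioi t, (a * b) v := hab.symm
    _ ≤ (∫⁻ v in Set.Ioi t, a v ^ (2:ℝ)) ^ ((1:ℝ)/2)
        * (∫⁻ v in Set.Ioi t, b v ^ (2:ℝ)) ^ ((1:ℝ)/2) := by
        simpa using Hol
    _ ≤ A ^ ((1:ℝ)/2) * (c⁻¹) ^ ((1:ℝ)/2) := by
        rw [ha_sq, hb_sq]
        gcongr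
  have key2 : (1:ℝ≥0∞) ≤ A * c⁻¹ := by
    have := ENNReal.rpow_le_rpow key (by norm_num : (0:ℝ) ≤ 2)
    rwa [ENNReal.one_rpow, ENNReal.mul_rpow_of_nonneg _ _ (by norm_num : (0:ℝ) ≤ 2),
      ← ENNReal.rpow_mul, ← ENNReal.rpow_mul, show ((1:ℝ)/2 * 2 = 1) by norm_num,
      ENNReal.rpow_one, ENNReal.rpow_one] at this
  have hcA : c ≤ A := by
    calc c = c * 1 := (mul_one c).symm
    _ ≤ c * (A * c⁻¹) := by gcongr
    _ = A * (c * c⁻¹) := by ring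
    _ = A := by rw [ENNReal.mul_inv_cancel hc0 hctop, mul_one]
  refine le_trans hcA ?_
  exact lintegral_mono_set (Set.Ioi_subset_Ioi htpos.le)
end

section
/- Let ξ be a nonnegative real random variable whose law has density f, let η be a random variable with values in a measurable space E, independent of ξ, let t > 0 be such that 0 < F(t) < ∞, and let φ : [0,∞) × E → ℝ be a measurable function such that φ(ξ, η) is square-integrable and φ(ξ + t, η) is integrable. Then Var{φ(ξ, η)} ≥ (E{φ(ξ, η)} − E{φ(ξ + t, η)})² / F(t). -/
open MeasureTheory ProbabilityTheory
open scoped ENNReal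

lemma aux_prod_withDensity_fst {α β : Type*} [MeasurableSpace α] [MeasurableSpace β]
    (ν : Measure α) (ρ : Measure β) [SigmaFinite ν] [SigmaFinite ρ]
    (g : α → ℝ≥0∞) (hg : Measurable g) [SigmaFinite (ν.withDensity g)] :
    (ν.prod ρ).withDensity (fun p => g p.1) = (ν.withDensity g).prod ρ := by
  refine (Measure.prod_eq fun s u hs hu => ?_).symm
  rw [withDensity_apply _ (hs.prod hu), ← Measure.prod_restrict,
    lintegral_prod (fun p => g p.1) (by fun_prop)]
  simp only [lintegral_const, Measure.restrict_apply_univ]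
  rw [lintegral_mul_const _ hg, ← withDensity_apply _ hs]

lemma aux_shift (f : ℝ → ℝ) (hf_meas : Measurable f)
    (hf_nonneg : ∀ v, 0 ≤ f v) (hf_zero : ∀ v : ℝ, v < 0 → f v = 0)
    (hf_pos : ∀ v : ℝ, 0 ≤ v → 0 < f v) (t : ℝ) (ht : 0 < t) :
    (volume.withDensity fun v => ENNReal.ofReal (f v)).withDensity
        (fun v => ENNReal.ofReal (f (v - t) / f v))
      = Measure.map (· + t) (volume.withDensity fun v => ENNReal.ofReal (f v)) := by
  have hr_meas : Measurable fun v => f (v - t) / f v :=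
    (hf_meas.comp (measurable_id.sub_const t)).div hf_meas
  have hfr : ∀ v, f v * (f (v - t) / f v) = f (v - t) := by
    intro v
    rcases lt_or_ge v 0 with h | h
    · rw [hf_zero v h, hf_zero (v - t) (by linarith)]; simp
    · field_simp [(hf_pos v h).ne']
  ext s hs
  rw [withDensity_apply _ hs, Measure.map_apply (measurable_add_const t) hs,
    withDensity_apply _ ((measurable_add_const t) hs),
    restrict_withDensity hs,
    lintegral_withDensity_eq_lintegral_mul _ hf_meas.ennreal_ofReal hr_meas.ennreal_ofReal]
  have : ∀ v, (ENNReal.ofReal (f v)) * ENNReal.ofReal (f (v - t) / f v)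
      = ENNReal.ofReal (f (v - t)) := by
    intro v
    rw [← ENNReal.ofReal_mul (hf_nonneg v), hfr]
  calc ∫⁻ v in s, ((fun v => ENNReal.ofReal (f v)) * fun v => ENNReal.ofReal (f (v - t) / f v)) v
      = ∫⁻ v in s, ENNReal.ofReal (f (v - t)) := by
        refine lintegral_congr fun v => ?_
        simpa using this v
    _ = ∫⁻ v in s, (fun v => ENNReal.ofReal (f (v - t))) v
          ∂(Measure.map (· + t) volume) := by rw [map_add_right_eq_self]
    _ = ∫⁻ x in (· + t) ⁻¹' s, ENNReal.ofReal (f (x + t - t)) ∂volume := by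
        rw [setLIntegral_map (f := fun v : ℝ => ENNReal.ofReal (f (v - t))) hs
          (by fun_prop) (measurable_add_const t)]
    _ = ∫⁻ x in (· + t) ⁻¹' s, ENNReal.ofReal (f x) ∂volume := by
        refine setLIntegral_congr_fun (measurable_add_const t hs) ?_
        exact fun x _ => by simp only [add_sub_cancel_right]

/-- Conditional-variance version of the Hammersley–Chapman–Robbins inequality:
if `ξ` is a nonnegative random variable whose law has a bounded density `f`
supported on `[0,∞)`, `η` is a random variable with values in a measurable space `E`
independent of `ξ`, `t > 0` satisfies `0 < F(t) < ∞`, and `φ` is measurable with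
`φ(ξ,η)` square-integrable and `φ(ξ+t,η)` integrable, then
`Var{φ(ξ,η)} ≥ (E{φ(ξ,η)} − E{φ(ξ+t,η)})² / F(t)`. -/
theorem stmt_6
    {Ω : Type*} [MeasurableSpace Ω] (μ : Measure Ω) [IsProbabilityMeasure μ]
    {E : Type*} [MeasurableSpace E]
    (ξ : Ω → ℝ) (hξ : Measurable ξ) (hξ_nonneg : ∀ ω, 0 ≤ ξ ω)
    (η : Ω → E) (hη : Measurable η)
    (h_indep : IndepFun ξ η μ)
    (f : ℝ → ℝ) (hf_meas : Measurable f) (hf_bdd : ∃ C : ℝ, ∀ v, f v ≤ C)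
    (hf_pos : ∀ v : ℝ, 0 ≤ v → 0 < f v) (hf_zero : ∀ v : ℝ, v < 0 → f v = 0)
    (hf_norm : ∫ v in Set.Ioi (0 : ℝ), f v = 1)
    (hlaw : Measure.map ξ μ = volume.withDensity fun v => ENNReal.ofReal (f v))
    (t : ℝ) (ht : 0 < t)
    (F : ℝ≥0∞)
    (hF : F = (∫⁻ v in Set.Ioi (0 : ℝ), ENNReal.ofReal ((f (v - t)) ^ 2 / f v)) - 1)
    (hF_pos : 0 < F) (hF_fin : F < ∞)
    (φ : ℝ × E → ℝ) (hφ : Measurable φ)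
    (hφ_sq : MemLp (fun ω => φ (ξ ω, η ω)) 2 μ)
    (hφ_t : Integrable (fun ω => φ (ξ ω + t, η ω)) μ) :
    variance (fun ω => φ (ξ ω, η ω)) μ ≥
      ((∫ ω, φ (ξ ω, η ω) ∂μ) - ∫ ω, φ (ξ ω + t, η ω) ∂μ) ^ 2 / F.toReal := by
  classical
  have hf_nonneg : ∀ v, 0 ≤ f v := fun v => by
    rcases lt_or_ge v 0 with h | h
    · exact (hf_zero v h).ge
    · exact (hf_pos v h).le
  set r : ℝ → ℝ := fun v => f (v - t) / f v with hrdef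
  have hr_meas : Measurable r := (hf_meas.comp (measurable_id.sub_const t)).div hf_meas
  have hr_nonneg : ∀ v, 0 ≤ r v := fun v => div_nonneg (hf_nonneg _) (hf_nonneg _)
  -- measures
  set ν : Measure ℝ := Measure.map ξ μ with hνdef
  set ρ : Measure E := Measure.map η μ with hρdef
  haveI hνprob : IsProbabilityMeasure ν := Measure.isProbabilityMeasure_map hξ.aemeasurable
  haveI hρprob : IsProbabilityMeasure ρ := Measure.isProbabilityMeasure_map hη.aemeasurable
  set π : Measure (ℝ × E) := ν.prod ρ with hπdef
  haveI hπprob : IsProbabilityMeasure π := by rw [hπdef]; infer_instance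
  have hmapπ : Measure.map (fun ω => (ξ ω, η ω)) μ = π :=
    (indepFun_iff_map_prod_eq_prod_map_map hξ.aemeasurable hη.aemeasurable).mp h_indep
  -- shift of ν
  have hshift : ν.withDensity (fun v => ENNReal.ofReal (r v)) = Measure.map (· + t) ν := by
    rw [hlaw]
    exact aux_shift f hf_meas hf_nonneg hf_zero hf_pos t ht
  haveI : IsProbabilityMeasure (ν.withDensity (fun v => ENNReal.ofReal (r v))) := by
    rw [hshift]
    exact Measure.isProbabilityMeasure_map (measurable_add_const t).aemeasurable
  -- product with density
  have hPi : π.withDensity (fun p => ENNReal.ofReal (r p.1))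
      = Measure.map (fun p : ℝ × E => (p.1 + t, p.2)) π := by
    rw [hπdef, aux_prod_withDensity_fst ν ρ _ hr_meas.ennreal_ofReal, hshift]
    have hmm := Measure.map_prod_map ν ρ (measurable_add_const t) (measurable_id (α := E))
    rw [Measure.map_id] at hmm
    rw [hmm]
    have hfun : (Prod.map (fun x : ℝ => x + t) (id : E → E))
        = fun p : ℝ × E => (p.1 + t, p.2) := rfl
    rw [hfun]
  have hTmeas : Measurable fun p : ℝ × E => (p.1 + t, p.2) :=
    (measurable_fst.add_const t).prodMk measurable_snd
  -- key transfer lemma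
  have key : ∀ ψ : ℝ × E → ℝ, Measurable ψ → Integrable (fun p => ψ (p.1 + t, p.2)) π →
      Integrable (fun p => ψ p * r p.1) π ∧
      ∫ p, ψ p * r p.1 ∂π = ∫ p, ψ (p.1 + t, p.2) ∂π := by
    intro ψ hψm hψint
    have h1 : Integrable ψ (Measure.map (fun p : ℝ × E => (p.1 + t, p.2)) π) :=
      (integrable_map_measure hψm.aestronglyMeasurable hTmeas.aemeasurable).mpr hψint
    rw [← hPi] at h1
    have hnn_meas : Measurable fun p : ℝ × E => Real.toNNReal (r p.1) :=
      (hr_meas.comp measurable_fst).real_toNNReal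
    have hwd : (π.withDensity fun p => ENNReal.ofReal (r p.1))
        = π.withDensity fun p => ((Real.toNNReal (r p.1) : ℝ≥0∞)) := rfl
    have h2 : Integrable (fun p : ℝ × E => Real.toNNReal (r p.1) • ψ p) π := by
      rw [← integrable_withDensity_iff_integrable_smul hnn_meas]
      rw [hwd] at h1; exact h1
    have heq : (fun p : ℝ × E => Real.toNNReal (r p.1) • ψ p)
        = fun p => ψ p * r p.1 := by
      funext p
      simp [NNReal.smul_def, Real.coe_toNNReal _ (hr_nonneg p.1), mul_comm]
    refine ⟨heq ▸ h2, ?_⟩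
    calc ∫ p, ψ p * r p.1 ∂π = ∫ p, Real.toNNReal (r p.1) • ψ p ∂π := by rw [heq]
      _ = ∫ p, ψ p ∂(π.withDensity fun p => ENNReal.ofReal (r p.1)) := by
          rw [hwd, integral_withDensity_eq_integral_smul hnn_meas]
      _ = ∫ p, ψ p ∂(Measure.map (fun p : ℝ × E => (p.1 + t, p.2)) π) := by rw [hPi]
      _ = ∫ p, ψ (p.1 + t, p.2) ∂π :=
          integral_map hTmeas.aemeasurable hψm.aestronglyMeasurable
  -- transfer between μ and π
  have hint_iff : ∀ ψ : ℝ × E → ℝ, Measurable ψ →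
      (Integrable (fun ω => ψ (ξ ω, η ω)) μ ↔ Integrable ψ π) := by
    intro ψ hm
    rw [← hmapπ]
    exact (integrable_map_measure hm.aestronglyMeasurable
      (hξ.prodMk hη).aemeasurable).symm
  have hint_eq : ∀ ψ : ℝ × E → ℝ, Measurable ψ →
      ∫ ω, ψ (ξ ω, η ω) ∂μ = ∫ p, ψ p ∂π := by
    intro ψ hm
    rw [← hmapπ, integral_map (hξ.prodMk hη).aemeasurable hm.aestronglyMeasurable]
  -- abbreviations
  set X : Ω → ℝ := fun ω => φ (ξ ω, η ω) with hXdef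
  set R : Ω → ℝ := fun ω => r (ξ ω) with hRdef
  set m : ℝ := ∫ ω, X ω ∂μ with hmdef
  set mt : ℝ := ∫ ω, φ (ξ ω + t, η ω) ∂μ with hmtdef
  -- apply key to φ
  have hφt_meas : Measurable fun p : ℝ × E => φ (p.1 + t, p.2) := hφ.comp hTmeas
  have hφt_π : Integrable (fun p : ℝ × E => φ (p.1 + t, p.2)) π :=
    (hint_iff _ hφt_meas).mp hφ_t
  obtain ⟨hkey_int, hkey_eq⟩ := key φ hφ hφt_π
  have hXR_int : Integrable (fun ω => X ω * R ω) μ :=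
    (hint_iff (fun p => φ p * r p.1) (hφ.mul (hr_meas.comp measurable_fst))).mpr hkey_int
  have hEXR : ∫ ω, X ω * R ω ∂μ = mt := by
    rw [hXdef, hRdef, hmtdef]
    calc ∫ ω, φ (ξ ω, η ω) * r (ξ ω) ∂μ
        = ∫ p, φ p * r p.1 ∂π := hint_eq _ (hφ.mul (hr_meas.comp measurable_fst))
      _ = ∫ p, φ (p.1 + t, p.2) ∂π := hkey_eq
      _ = ∫ ω, φ (ξ ω + t, η ω) ∂μ := (hint_eq _ hφt_meas).symm
  -- apply key to constant 1
  obtain ⟨hone_int, hone_eq⟩ := key (fun _ => (1 : ℝ)) measurable_const (integrable_const 1)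
  have hR_int : Integrable R μ := by
    have := (hint_iff (fun p => r p.1) (hr_meas.comp measurable_fst)).mpr
      (by simpa using hone_int)
    exact this
  have hER : ∫ ω, R ω ∂μ = 1 := by
    rw [hRdef]
    calc ∫ ω, r (ξ ω) ∂μ = ∫ p, r p.1 ∂π := hint_eq _ (hr_meas.comp measurable_fst)
      _ = ∫ p : ℝ × E, (1 : ℝ) * r p.1 ∂π := by simp
      _ = ∫ p : ℝ × E, (1 : ℝ) ∂π := hone_eq
      _ = 1 := by simp
  -- J
  set J : ℝ≥0∞ := ∫⁻ v in Set.Ioi (0 : ℝ), ENNReal.ofReal ((f (v - t)) ^ 2 / f v) with hJdef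
  have hJfull : (∫⁻ v, ENNReal.ofReal ((f (v - t)) ^ 2 / f v)) = J := by
    rw [hJdef, ← lintegral_add_compl (fun v => ENNReal.ofReal ((f (v - t)) ^ 2 / f v))
      measurableSet_Ioi]
    have : ∫⁻ v in (Set.Ioi (0:ℝ))ᶜ, ENNReal.ofReal ((f (v - t)) ^ 2 / f v) = 0 := by
      rw [← lintegral_zero (μ := volume.restrict (Set.Ioi (0:ℝ))ᶜ)]
      refine setLIntegral_congr_fun measurableSet_Ioi.compl ?_
      refine fun v hv => show ENNReal.ofReal ((f (v - t)) ^ 2 / f v) = 0 from ?_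
      simp only [Set.mem_compl_iff, Set.mem_Ioi, not_lt] at hv
      rcases lt_or_eq_of_le hv with h | h
      · rw [hf_zero v h]; simp
      · rw [h, hf_zero (0 - t) (by linarith)]; simp
    rw [this, add_zero]
  have hrsq : ∀ v, f v * (r v) ^ 2 = (f (v - t)) ^ 2 / f v := by
    intro v
    rcases lt_or_ge v 0 with h | h
    · rw [hf_zero v h, zero_mul, hf_zero (v - t) (by linarith)]
      simp
    · rw [hrdef]
      field_simp [(hf_pos v h).ne']
  have hlint_r2 : ∫⁻ v, ENNReal.ofReal ((r v) ^ 2) ∂ν = J := by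
    rw [hlaw, lintegral_withDensity_eq_lintegral_mul _ hf_meas.ennreal_ofReal
      (by fun_prop : Measurable fun v => ENNReal.ofReal ((r v) ^ 2)), ← hJfull]
    refine lintegral_congr fun v => ?_
    simp only [Pi.mul_apply]
    rw [← ENNReal.ofReal_mul (hf_nonneg v), hrsq v]
  have hJ_ne_top : J ≠ ∞ := by
    intro h
    rw [hF, h] at hF_fin
    simp at hF_fin
  have hJ_gt_one : (1 : ℝ≥0∞) < J := by
    have := hF_pos
    rw [hF] at this
    exact tsub_pos_iff_lt.mp this
  have hFto : F.toReal = J.toReal - 1 := by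
    rw [hF, ENNReal.toReal_sub_of_le hJ_gt_one.le hJ_ne_top]
    simp
  -- R is in L2
  have hR2_int_ν : Integrable (fun v => (r v) ^ 2) ν := by
    refine ⟨(hr_meas.pow_const 2).aestronglyMeasurable, ?_⟩
    rw [hasFiniteIntegral_iff_ofReal (Filter.Eventually.of_forall fun v => sq_nonneg _)]
    rw [hlint_r2]
    exact hJ_ne_top.lt_top
  have hR_mem : MemLp R 2 μ := by
    have h1 : MemLp r 2 ν :=
      (memLp_two_iff_integrable_sq hr_meas.aestronglyMeasurable).mpr hR2_int_ν
    exact (memLp_map_measure_iff hr_meas.aestronglyMeasurable hξ.aemeasurable).mp h1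
  have hER2 : ∫ ω, R ω ^ 2 ∂μ = J.toReal := by
    have h0 : ∫ ω, R ω ^ 2 ∂μ = ∫ v, (r v) ^ 2 ∂ν := by
      rw [hνdef, integral_map hξ.aemeasurable (hr_meas.pow_const 2).aestronglyMeasurable]
    rw [h0, integral_eq_lintegral_of_nonneg_ae
      (Filter.Eventually.of_forall fun v => sq_nonneg _)
      (hr_meas.pow_const 2).aestronglyMeasurable, hlint_r2]
  -- G
  set G : Ω → ℝ := fun ω => R ω - 1 with hGdef
  have hG_mem : MemLp G 2 μ := hR_mem.sub (memLp_const 1)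
  have hR2_int : Integrable (fun ω => R ω ^ 2) μ := hR_mem.integrable_sq
  have hEG2 : ∫ ω, G ω ^ 2 ∂μ = F.toReal := by
    have hexp : ∀ ω, G ω ^ 2 = R ω ^ 2 - 2 * R ω + 1 := fun ω => by rw [hGdef]; ring
    have hI3 : Integrable (fun ω => R ω ^ 2 - 2 * R ω) μ := hR2_int.sub (hR_int.const_mul 2)
    calc ∫ ω, G ω ^ 2 ∂μ = ∫ ω, (R ω ^ 2 - 2 * R ω + 1) ∂μ := by
          exact integral_congr_ae (Filter.Eventually.of_forall hexp)
      _ = (∫ ω, (R ω ^ 2 - 2 * R ω) ∂μ) + ∫ ω, (1 : ℝ) ∂μ :=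
          integral_add hI3 (integrable_const 1)
      _ = ((∫ ω, R ω ^ 2 ∂μ) - ∫ ω, 2 * R ω ∂μ) + ∫ ω, (1 : ℝ) ∂μ := by
          rw [integral_sub hR2_int (hR_int.const_mul 2)]
      _ = J.toReal - 2 * 1 + 1 := by rw [hER2, integral_const_mul, hER]; simp
      _ = F.toReal := by rw [hFto]; ring
  -- mean of G
  have hEG : ∫ ω, G ω ∂μ = 0 := by
    rw [hGdef]
    rw [integral_sub hR_int (integrable_const 1), hER]
    simp
  -- centered X
  set X' : Ω → ℝ := fun ω => X ω - m with hX'def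
  have hX'_mem : MemLp X' 2 μ := hφ_sq.sub (memLp_const m)
  have hX_int : Integrable X μ := hφ_sq.integrable one_le_two
  have hVar : variance X μ = ∫ ω, X' ω ^ 2 ∂μ := by
    rw [variance_eq_integral hφ_sq.aemeasurable]
  -- cross term
  have hEX'G : ∫ ω, X' ω * G ω ∂μ = mt - m := by
    have hexp : ∀ ω, X' ω * G ω = X ω * R ω - X ω - m * R ω + m := fun ω => by
      rw [hX'def, hGdef]; ring
    have hI1 : Integrable (fun ω => X ω * R ω - X ω) μ := hXR_int.sub hX_int
    have hI2 : Integrable (fun ω => X ω * R ω - X ω - m * R ω) μ :=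
      hI1.sub (hR_int.const_mul m)
    calc ∫ ω, X' ω * G ω ∂μ = ∫ ω, (X ω * R ω - X ω - m * R ω + m) ∂μ :=
          integral_congr_ae (Filter.Eventually.of_forall hexp)
      _ = (∫ ω, (X ω * R ω - X ω - m * R ω) ∂μ) + ∫ ω, (m : ℝ) ∂μ :=
          integral_add hI2 (integrable_const m)
      _ = ((∫ ω, (X ω * R ω - X ω) ∂μ) - ∫ ω, m * R ω ∂μ) + ∫ ω, (m : ℝ) ∂μ := by
          rw [integral_sub hI1 (hR_int.const_mul m)]
      _ = (((∫ ω, X ω * R ω ∂μ) - ∫ ω, X ω ∂μ) - ∫ ω, m * R ω ∂μ) + ∫ ω, (m : ℝ) ∂μ := by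
          rw [integral_sub hXR_int hX_int]
      _ = (mt - m - m * 1) + m := by rw [hEXR, integral_const_mul, hER, ← hmdef]; simp
      _ = mt - m := by ring
  -- Cauchy-Schwarz
  have hCS : (mt - m) ^ 2 ≤ (∫ ω, X' ω ^ 2 ∂μ) * ∫ ω, G ω ^ 2 ∂μ := by
    have h2 : (2 : ℝ).HolderConjugate 2 := by
      exact Real.HolderConjugate.two_two
    have hX'2 : MemLp X' (ENNReal.ofReal (2 : ℝ)) μ := by
      rw [show ENNReal.ofReal (2 : ℝ) = 2 by norm_num]
      exact hX'_mem
    have hG2 : MemLp G (ENNReal.ofReal (2 : ℝ)) μ := by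
      rw [show ENNReal.ofReal (2 : ℝ) = 2 by norm_num]
      exact hG_mem
    have hHolder := integral_mul_norm_le_Lp_mul_Lq h2 hX'2 hG2
    simp only [Real.norm_eq_abs] at hHolder
    have habs : |∫ ω, X' ω * G ω ∂μ| ≤ ∫ ω, |X' ω| * |G ω| ∂μ := by
      simpa [abs_mul] using norm_integral_le_integral_norm (fun ω => X' ω * G ω)
    have hnorm_sq : ∀ (h : Ω → ℝ), (∫ ω, |h ω| ^ (2 : ℝ) ∂μ) = ∫ ω, h ω ^ 2 ∂μ := by
      intro h
      refine integral_congr_ae (Filter.Eventually.of_forall fun ω => ?_)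
      show |h ω| ^ (2 : ℝ) = h ω ^ 2
      rw [show ((2 : ℝ)) = ((2 : ℕ) : ℝ) by norm_num, Real.rpow_natCast, sq_abs]
    rw [hnorm_sq X', hnorm_sq G] at hHolder
    have ha : (0 : ℝ) ≤ ∫ ω, X' ω ^ 2 ∂μ := integral_nonneg fun ω => sq_nonneg _
    have hb : (0 : ℝ) ≤ ∫ ω, G ω ^ 2 ∂μ := integral_nonneg fun ω => sq_nonneg _
    calc (mt - m) ^ 2 = |∫ ω, X' ω * G ω ∂μ| ^ 2 := by rw [hEX'G, sq_abs]
      _ ≤ ((∫ ω, X' ω ^ 2 ∂μ) ^ ((1 : ℝ)/2) * (∫ ω, G ω ^ 2 ∂μ) ^ ((1 : ℝ)/2)) ^ 2 := by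
          apply pow_le_pow_left₀ (abs_nonneg _)
          exact habs.trans hHolder
      _ = (∫ ω, X' ω ^ 2 ∂μ) * ∫ ω, G ω ^ 2 ∂μ := by
          rw [mul_pow, ← Real.rpow_natCast ((∫ ω, X' ω ^ 2 ∂μ) ^ ((1:ℝ)/2)) 2,
            ← Real.rpow_natCast ((∫ ω, G ω ^ 2 ∂μ) ^ ((1:ℝ)/2)) 2,
            ← Real.rpow_mul ha, ← Real.rpow_mul hb]
          norm_num
  -- conclude
  have hFpos : (0 : ℝ) < F.toReal := ENNReal.toReal_pos hF_pos.ne' hF_fin.ne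
  rw [ge_iff_le, div_le_iff₀ hFpos]
  have : (m - mt) ^ 2 = (mt - m) ^ 2 := by ring
  rw [hVar]
  calc (m - mt) ^ 2 = (mt - m) ^ 2 := by ring
    _ ≤ (∫ ω, X' ω ^ 2 ∂μ) * ∫ ω, G ω ^ 2 ∂μ := hCS
    _ = (∫ ω, X' ω ^ 2 ∂μ) * F.toReal := by rw [hEG2]
end

section
/- Let A be a bounded self-adjoint operator on ℓ²(ℤ), A^s = A + s·Π₀ with Π₀ the rank-one orthogonal projection onto the span of δ₀, and z ∈ ℂ with Im z ≠ 0. Then G(0,0;z) ≠ 0 and, for all x, y ∈ ℤ, lim_{s → ∞} G^s(x,y;z) = G(x,y;z) − G(x,0;z)·G(0,y;z)/G(0,0;z), where G(x,y;z) = ⟨δ_x, (A − z)^{-1} δ_y⟩ and G^s(x,y;z) = ⟨δ_x, (A^s − z)^{-1} δ_y⟩. -/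
open Filter

/-- Let `A` be a bounded self-adjoint operator on `ℓ²(ℤ)`, `A^s = A + s·Π₀` with `Π₀`
the rank-one projection onto the span of `δ₀`, and `z ∈ ℂ` with `Im z ≠ 0`. Then
`G(0,0;z) ≠ 0` and, for all `x, y ∈ ℤ`,
`lim_{s → ∞} G^s(x,y;z) = G(x,y;z) − G(x,0;z)·G(0,y;z)/G(0,0;z)`,
where `G(x,y;z) = ⟨δ_x, (A-z)⁻¹δ_y⟩` and `G^s(x,y;z) = ⟨δ_x, (A^s-z)⁻¹δ_y⟩`. -/
theorem stmt_10
    (δ : ℤ → lp (fun _ : ℤ => ℂ) 2) (hδ : ∀ x : ℤ, δ x = lp.single 2 x (1 : ℂ))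
    (A : lp (fun _ : ℤ => ℂ) 2 →L[ℂ] lp (fun _ : ℤ => ℂ) 2) (hA : IsSelfAdjoint A)
    (P0 : lp (fun _ : ℤ => ℂ) 2 →L[ℂ] lp (fun _ : ℤ => ℂ) 2)
    (hP0 : ∀ u, P0 u = (inner ℂ (δ 0) u : ℂ) • δ 0)
    (As : ℝ → (lp (fun _ : ℤ => ℂ) 2 →L[ℂ] lp (fun _ : ℤ => ℂ) 2))
    (hAs : ∀ s : ℝ, As s = A + (s : ℂ) • P0)
    (z : ℂ) (hz : z.im ≠ 0)
    (R : lp (fun _ : ℤ => ℂ) 2 →L[ℂ] lp (fun _ : ℤ => ℂ) 2)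
    (hR₁ : (A - z • (1 : lp (fun _ : ℤ => ℂ) 2 →L[ℂ] lp (fun _ : ℤ => ℂ) 2)) ∘L R = 1)
    (hR₂ : R ∘L (A - z • (1 : lp (fun _ : ℤ => ℂ) 2 →L[ℂ] lp (fun _ : ℤ => ℂ) 2)) = 1)
    (Rs : ℝ → (lp (fun _ : ℤ => ℂ) 2 →L[ℂ] lp (fun _ : ℤ => ℂ) 2))
    (hRs₁ : ∀ s : ℝ,
      (As s - z • (1 : lp (fun _ : ℤ => ℂ) 2 →L[ℂ] lp (fun _ : ℤ => ℂ) 2)) ∘L Rs s = 1)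
    (hRs₂ : ∀ s : ℝ,
      Rs s ∘L (As s - z • (1 : lp (fun _ : ℤ => ℂ) 2 →L[ℂ] lp (fun _ : ℤ => ℂ) 2)) = 1)
    (G : ℤ → ℤ → ℂ) (Gs : ℝ → ℤ → ℤ → ℂ)
    (hG : ∀ x y : ℤ, G x y = inner ℂ (δ x) (R (δ y)))
    (hGs : ∀ (s : ℝ) (x y : ℤ), Gs s x y = inner ℂ (δ x) (Rs s (δ y))) :
    G 0 0 ≠ 0 ∧
      ∀ x y : ℤ, Tendsto (fun s : ℝ => Gs s x y) atTop
        (nhds (G x y - G x 0 * G 0 y / G 0 0)) := by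
  -- δ 0 ≠ 0
  have hδ0 : δ 0 ≠ 0 := by
    rw [hδ]
    intro h
    have h1 := congrArg (fun f : lp (fun _ : ℤ => ℂ) 2 => (f : ∀ i : ℤ, ℂ) 0) h
    simp only [lp.single_apply_self, lp.coeFn_zero, Pi.zero_apply] at h1
    exact one_ne_zero h1
  set v : lp (fun _ : ℤ => ℂ) 2 := R (δ 0) with hv_def
  have hv : (A - z • (1 : lp (fun _ : ℤ => ℂ) 2 →L[ℂ] lp (fun _ : ℤ => ℂ) 2)) v = δ 0 := by
    have := ContinuousLinearMap.ext_iff.mp hR₁ (δ 0)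
    simpa using this
  have hvne : v ≠ 0 := by
    intro h
    rw [h] at hv
    simp at hv
    exact hδ0 hv.symm
  have hnv : ‖v‖ ^ 2 ≠ 0 := pow_ne_zero 2 (norm_ne_zero_iff.mpr hvne)
  -- G 0 0 ≠ 0 via imaginary part
  have hG00 : G 0 0 = (inner ℂ (A v) v : ℂ) - (starRingEnd ℂ) z * inner ℂ v v := by
    rw [hG, ← hv_def, ← hv]
    simp [ContinuousLinearMap.sub_apply, ContinuousLinearMap.smul_apply,
      ContinuousLinearMap.one_apply, inner_sub_left, inner_smul_left]
    ring
  have hsym : (inner ℂ (A v) v : ℂ).im = 0 := by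
    have h1 : (inner ℂ (A v) v : ℂ) = inner ℂ v (A v) := hA.isSymmetric v v
    have h2 : (inner ℂ v (A v) : ℂ) = (starRingEnd ℂ) (inner ℂ (A v) v) := (inner_conj_symm _ _).symm
    have h3 : (inner ℂ (A v) v : ℂ) = (starRingEnd ℂ) (inner ℂ (A v) v) := h1.trans h2
    have h4 := congrArg Complex.im h3
    rw [Complex.conj_im] at h4
    linarith
  have hinner_vv : (inner ℂ v v : ℂ) = ((‖v‖ : ℝ) : ℂ) ^ 2 := inner_self_eq_norm_sq_to_K v
  have hG00im : (G 0 0).im = z.im * ‖v‖ ^ 2 := by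
    rw [hG00, hinner_vv]
    simp [Complex.sub_im, hsym, Complex.mul_im, Complex.conj_re, Complex.conj_im,
      ← Complex.ofReal_pow, Complex.ofReal_re, Complex.ofReal_im]
  have hG00ne : G 0 0 ≠ 0 := by
    intro h
    rw [h] at hG00im
    exact (mul_ne_zero hz hnv) hG00im.symm
  refine ⟨hG00ne, ?_⟩
  -- key resolvent identity
  have key : ∀ (s : ℝ) (x y : ℤ), Gs s x y = G x y - s * Gs s 0 y * G x 0 := by
    intro s x y
    set w : lp (fun _ : ℤ => ℂ) 2 := Rs s (δ y) with hw_def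
    have h1 : (A - z • (1 : lp (fun _ : ℤ => ℂ) 2 →L[ℂ] lp (fun _ : ℤ => ℂ) 2)) w
        + ((s : ℂ) * Gs s 0 y) • δ 0 = δ y := by
      have h := ContinuousLinearMap.ext_iff.mp (hRs₁ s) (δ y)
      rw [hAs] at h
      simp only [ContinuousLinearMap.comp_apply, ContinuousLinearMap.sub_apply,
        ContinuousLinearMap.add_apply, ContinuousLinearMap.smul_apply,
        ContinuousLinearMap.one_apply] at h
      rw [hP0, ← hw_def] at h
      simp only [smul_smul] at h
      rw [hGs, ← hw_def]
      simp only [ContinuousLinearMap.sub_apply, ContinuousLinearMap.smul_apply,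
        ContinuousLinearMap.one_apply]
      rw [sub_add_eq_add_sub]
      exact h
    have h2 : w + ((s : ℂ) * Gs s 0 y) • v = R (δ y) := by
      have h5 := congrArg R h1
      rw [map_add, map_smul] at h5
      have h3 : R ((A - z • (1 : lp (fun _ : ℤ => ℂ) 2 →L[ℂ] lp (fun _ : ℤ => ℂ) 2)) w) = w := by
        have := ContinuousLinearMap.ext_iff.mp hR₂ w
        simpa using this
      rw [h3] at h5
      exact h5
    have h6 := congrArg (fun u => (inner ℂ (δ x) u : ℂ)) h2
    simp only [inner_add_right, inner_smul_right] at h6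
    rw [hGs, hG x y, hG x 0, ← hv_def, ← hw_def]
    rw [← h6]
    ring
  have hden : ∀ s : ℝ, (1 : ℂ) + (s : ℂ) * G 0 0 ≠ 0 := by
    intro s h
    rcases eq_or_ne s 0 with hs | hs
    · rw [hs] at h; simp at h
    · have h7 := congrArg Complex.im h
      simp [Complex.add_im, Complex.mul_im] at h7
      rw [hG00im] at h7
      rcases h7 with h7 | h7
      · exact hs h7
      · exact (mul_ne_zero hz hnv) h7
  have h0y : ∀ (s : ℝ) (y : ℤ), Gs s 0 y = G 0 y / (1 + (s : ℂ) * G 0 0) := by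
    intro s y
    have h := key s 0 y
    rw [eq_div_iff (hden s)]
    linear_combination h
  have hform : ∀ (s : ℝ) (x y : ℤ),
      Gs s x y = G x y - (s : ℂ) * (G 0 y / (1 + (s : ℂ) * G 0 0)) * G x 0 := by
    intro s x y
    rw [key s x y, h0y s y]
  intro x y
  -- limit
  have hinv : Tendsto (fun s : ℝ => ((s : ℂ))⁻¹) atTop (nhds 0) := by
    have h1 : Tendsto (fun s : ℝ => s⁻¹) atTop (nhds 0) := tendsto_inv_atTop_zero
    have h2 := (Complex.continuous_ofReal.tendsto 0).comp h1
    simpa [Function.comp_def] using h2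
  have hlim : Tendsto (fun s : ℝ => ((s : ℂ)⁻¹ + G 0 0)) atTop (nhds (G 0 0)) := by
    simpa using hinv.add (tendsto_const_nhds (x := G 0 0))
  have hlim2 : Tendsto (fun s : ℝ => ((s : ℂ)⁻¹ + G 0 0)⁻¹) atTop (nhds ((G 0 0)⁻¹)) :=
    hlim.inv₀ hG00ne
  have hmain : Tendsto (fun s : ℝ => G x y - ((s : ℂ)⁻¹ + G 0 0)⁻¹ * G 0 y * G x 0) atTop
      (nhds (G x y - (G 0 0)⁻¹ * G 0 y * G x 0)) :=
    tendsto_const_nhds.sub ((hlim2.mul tendsto_const_nhds).mul tendsto_const_nhds)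
  have heq : ∀ᶠ s : ℝ in atTop,
      G x y - ((s : ℂ)⁻¹ + G 0 0)⁻¹ * G 0 y * G x 0 = Gs s x y := by
    filter_upwards [eventually_gt_atTop (0 : ℝ)] with s hs
    have hs0 : (s : ℂ) ≠ 0 := by exact_mod_cast ne_of_gt hs
    have hd := hden s
    have h9 : (s : ℂ)⁻¹ + G 0 0 = (1 + (s : ℂ) * G 0 0) / (s : ℂ) := by
      field_simp
    rw [hform s x y, h9, inv_div]
    ring
  have hfinal := hmain.congr' heq
  have hpt : G x y - (G 0 0)⁻¹ * G 0 y * G x 0 = G x y - G x 0 * G 0 y / G 0 0 := by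
    field_simp
  rwa [hpt] at hfinal
end

section
/- Let V : ℤ → ℝ be bounded, H the one-dimensional discrete Schrödinger operator with potential V on ℓ²(ℤ), and for t ∈ ℝ let H^t be obtained from H by replacing the potential value V(0) at the origin by V(0) + t (i.e. H^t = H + t·Π₀ with Π₀ the projection onto the span of δ₀). Then for every z ∈ ℂ with Im z ≠ 0 and all integers x ≥ 0 and y ≤ 0, lim_{t → ∞} G^t(x,y;z) = 0, where G^t(x,y;z) = ⟨δ_x, (H^t − z)^{-1} δ_y⟩. -/
open Filter

noncomputable section

private lemma inner_eq_tsum' (f g : lp (fun _ : ℤ => ℂ) 2) :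
    (inner ℂ f g : ℂ) = ∑' k : ℤ, (starRingEnd ℂ) (f k) * g k := by
  rw [lp.inner_eq_tsum]
  simp [RCLike.inner_apply, mul_comm]

private lemma summable_conj_mul (f g : lp (fun _ : ℤ => ℂ) 2) :
    Summable fun k : ℤ => (starRingEnd ℂ) (f k) * g k := by
  simpa [RCLike.inner_apply, mul_comm] using lp.summable_inner (𝕜 := ℂ) f g

private lemma shift_mem (u : lp (fun _ : ℤ => ℂ) 2) (c : ℤ) :
    Memℓp (fun k : ℤ => u (k + c)) 2 := by
  apply memℓp_gen
  have h := (lp.memℓp u).summable (p := 2) (by norm_num)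
  have := ((Equiv.addRight c).summable_iff
    (f := fun k : ℤ => ‖u k‖ ^ (2 : ENNReal).toReal)).2 h
  simpa [Function.comp_def, Equiv.coe_addRight] using this

private lemma summable_shift (u : lp (fun _ : ℤ => ℂ) 2) (c : ℤ) :
    Summable fun k : ℤ => (starRingEnd ℂ) (u k) * u (k + c) := by
  set w : lp (fun _ : ℤ => ℂ) 2 := ⟨fun k => u (k + c), shift_mem u c⟩ with hw
  have hwk : ∀ k : ℤ, w k = u (k + c) := fun _ => rfl
  have ha0 := summable_conj_mul u w
  simpa [hwk] using ha0

private lemma im_conj_mul_comm (a b : ℂ) :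
    ((starRingEnd ℂ) a * b).im = -(((starRingEnd ℂ) b) * a).im := by
  simp [Complex.mul_im]
  ring

set_option maxHeartbeats 1000000 in
private lemma im_inner_H_zero (V : ℤ → ℝ)
    (H : lp (fun _ : ℤ => ℂ) 2 →L[ℂ] lp (fun _ : ℤ => ℂ) 2)
    (hH : ∀ (u : lp (fun _ : ℤ => ℂ) 2) (x : ℤ),
      (H u) x = -u (x + 1) - u (x - 1) + 2 * u x + (V x : ℂ) * u x)
    (u : lp (fun _ : ℤ => ℂ) 2) : (inner ℂ u (H u) : ℂ).im = 0 := by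
  have ha : Summable fun k : ℤ => (starRingEnd ℂ) (u k) * u (k + 1) :=
    summable_shift u 1
  have hb : Summable fun k : ℤ => (starRingEnd ℂ) (u k) * u (k - 1) := by
    have := summable_shift u (-1)
    simpa [sub_eq_add_neg] using this
  have hsum : Summable fun k : ℤ => (starRingEnd ℂ) (u k) * (H u) k :=
    summable_conj_mul u (H u)
  have haim : Summable fun k : ℤ => ((starRingEnd ℂ) (u k) * u (k + 1)).im :=
    (Complex.imCLM : ℂ →L[ℝ] ℝ).summable ha
  have hbim : Summable fun k : ℤ => ((starRingEnd ℂ) (u k) * u (k - 1)).im :=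
    (Complex.imCLM : ℂ →L[ℝ] ℝ).summable hb
  rw [inner_eq_tsum']
  have h1 : (∑' k : ℤ, (starRingEnd ℂ) (u k) * (H u) k).im
      = ∑' k : ℤ, ((starRingEnd ℂ) (u k) * (H u) k).im :=
    (Complex.imCLM : ℂ →L[ℝ] ℝ).map_tsum hsum
  rw [h1]
  have h2 : ∀ k : ℤ, ((starRingEnd ℂ) (u k) * (H u) k).im
      = (-((starRingEnd ℂ) (u k) * u (k + 1)).im)
        - ((starRingEnd ℂ) (u k) * u (k - 1)).im := by
    intro k
    rw [hH u k]
    simp [Complex.mul_im, Complex.add_im, Complex.sub_im]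
    ring
  rw [tsum_congr h2, Summable.tsum_sub haim.neg hbim, tsum_neg]
  have h3 : ∑' k : ℤ, ((starRingEnd ℂ) (u k) * u (k - 1)).im
      = -∑' k : ℤ, ((starRingEnd ℂ) (u k) * u (k + 1)).im := by
    have h4 : ∀ k : ℤ, ((starRingEnd ℂ) (u k) * u (k - 1)).im
        = -((starRingEnd ℂ) (u (k - 1)) * u k).im := fun k => im_conj_mul_comm _ _
    rw [tsum_congr h4, tsum_neg]
    congr 1
    have := (Equiv.addRight (1 : ℤ)).tsum_eq
      (f := fun k : ℤ => ((starRingEnd ℂ) (u (k - 1)) * u k).im)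
    rw [← this]
    apply tsum_congr
    intro k
    simp
  rw [h3]
  ring



set_option maxHeartbeats 2000000 in
/-- Let `H` be the one-dimensional discrete Schrödinger operator on `ℓ²(ℤ)` with bounded
potential `V`, and for `t ∈ ℝ` let `H^t = H + t·Π₀` be obtained by replacing `V(0)` with
`V(0) + t` (`Π₀` is the projection onto the span of `δ₀`). Then for every `z ∈ ℂ` with
`Im z ≠ 0` and all integers `x ≥ 0`, `y ≤ 0`, one has `lim_{t → ∞} G^t(x,y;z) = 0`,
where `G^t(x,y;z) = ⟨δ_x, (H^t-z)⁻¹δ_y⟩`. -/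
theorem stmt_12
    (V : ℤ → ℝ) (hV : ∃ C : ℝ, ∀ x : ℤ, |V x| ≤ C)
    (δ : ℤ → lp (fun _ : ℤ => ℂ) 2) (hδ : ∀ x : ℤ, δ x = lp.single 2 x (1 : ℂ))
    (H : lp (fun _ : ℤ => ℂ) 2 →L[ℂ] lp (fun _ : ℤ => ℂ) 2)
    (hH : ∀ (u : lp (fun _ : ℤ => ℂ) 2) (x : ℤ),
      (H u) x = -u (x + 1) - u (x - 1) + 2 * u x + (V x : ℂ) * u x)
    (P0 : lp (fun _ : ℤ => ℂ) 2 →L[ℂ] lp (fun _ : ℤ => ℂ) 2)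
    (hP0 : ∀ u, P0 u = (inner ℂ (δ 0) u : ℂ) • δ 0)
    (Ht : ℝ → (lp (fun _ : ℤ => ℂ) 2 →L[ℂ] lp (fun _ : ℤ => ℂ) 2))
    (hHt : ∀ t : ℝ, Ht t = H + (t : ℂ) • P0)
    (z : ℂ) (hz : z.im ≠ 0)
    (Rt : ℝ → (lp (fun _ : ℤ => ℂ) 2 →L[ℂ] lp (fun _ : ℤ => ℂ) 2))
    (hRt₁ : ∀ t : ℝ,
      (Ht t - z • (1 : lp (fun _ : ℤ => ℂ) 2 →L[ℂ] lp (fun _ : ℤ => ℂ) 2)) ∘L Rt t = 1)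
    (hRt₂ : ∀ t : ℝ,
      Rt t ∘L (Ht t - z • (1 : lp (fun _ : ℤ => ℂ) 2 →L[ℂ] lp (fun _ : ℤ => ℂ) 2)) = 1)
    (Gt : ℝ → ℤ → ℤ → ℂ)
    (hGt : ∀ (t : ℝ) (x y : ℤ), Gt t x y = inner ℂ (δ x) (Rt t (δ y))) :
    ∀ x y : ℤ, 0 ≤ x → y ≤ 0 →
      Tendsto (fun t : ℝ => Gt t x y) atTop (nhds 0) := by
  intro x y hx hy
  have hzim : (0 : ℝ) < |z.im| := abs_pos.mpr hz
  -- pairing with delta functions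
  have hpairL : ∀ (k : ℤ) (w : lp (fun _ : ℤ => ℂ) 2), (inner ℂ (δ k) w : ℂ) = w k := by
    intro k w
    rw [hδ, lp.inner_single_left]
    simp [RCLike.inner_apply]
  have hpairR : ∀ (k : ℤ) (w : lp (fun _ : ℤ => ℂ) 2),
      (inner ℂ w (δ k) : ℂ) = (starRingEnd ℂ) (w k) := by
    intro k w
    rw [hδ, lp.inner_single_right]
    simp [RCLike.inner_apply]
  have hnormδ : ∀ k : ℤ, ‖δ k‖ = 1 := by
    intro k
    rw [hδ k]
    have := lp.norm_single (p := 2) (E := fun _ : ℤ => ℂ) (by norm_num)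
      k (1 : ℂ)
    simpa using this
  -- action of Ht
  have hHtu : ∀ (t : ℝ) (w : lp (fun _ : ℤ => ℂ) 2),
      Ht t w = H w + ((t : ℂ) * w 0) • δ 0 := by
    intro t w
    rw [hHt]
    simp only [ContinuousLinearMap.add_apply, ContinuousLinearMap.smul_apply, hP0,
      hpairL, smul_smul]
  -- quadratic form of Ht is real
  have himHt : ∀ (t : ℝ) (w : lp (fun _ : ℤ => ℂ) 2), (inner ℂ w (Ht t w) : ℂ).im = 0 := by
    intro t w
    rw [hHtu, inner_add_right, inner_smul_right, hpairR]
    have h1 := im_inner_H_zero V H hH w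
    have h2 : ((t : ℂ) * w 0 * (starRingEnd ℂ) (w 0)).im = 0 := by
      simp [Complex.mul_im, Complex.mul_re]
      ring
    simp [Complex.add_im, h1, h2]
  -- resolvent bound
  have hres : ∀ (t : ℝ) (f : lp (fun _ : ℤ => ℂ) 2), ‖Rt t f‖ ≤ ‖f‖ / |z.im| := by
    intro t f
    set w : lp (fun _ : ℤ => ℂ) 2 := Rt t f with hwdef
    have heq : Ht t w - z • w = f := by
      have h := congrArg (fun T : lp (fun _ : ℤ => ℂ) 2 →L[ℂ] lp (fun _ : ℤ => ℂ) 2 => T f)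
        (hRt₁ t)
      simpa [ContinuousLinearMap.comp_apply, ContinuousLinearMap.sub_apply,
        ContinuousLinearMap.smul_apply, ContinuousLinearMap.one_apply] using h
    have him : (inner ℂ w f : ℂ).im = -(z.im * ‖w‖ ^ 2) := by
      rw [← heq, inner_sub_right, inner_smul_right, inner_self_eq_norm_sq_to_K]
      rw [Complex.sub_im, himHt t w]
      simp [Complex.mul_im, ← Complex.ofReal_pow, Complex.ofReal_im, Complex.ofReal_re]
    have h2 : |z.im| * ‖w‖ ^ 2 ≤ ‖w‖ * ‖f‖ := by
      have e1 : |z.im| * ‖w‖ ^ 2 = |(inner ℂ w f : ℂ).im| := by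
        rw [him, abs_neg, abs_mul]
        congr 1
        exact (_root_.abs_of_nonneg (sq_nonneg _)).symm
      rw [e1]
      calc |(inner ℂ w f : ℂ).im| ≤ ‖(inner ℂ w f : ℂ)‖ := Complex.abs_im_le_norm _
        _ = ‖(inner ℂ w f : ℂ)‖ := rfl
        _ ≤ ‖w‖ * ‖f‖ := norm_inner_le_norm _ _
    rcases eq_or_lt_of_le (norm_nonneg w) with h0 | h0
    · rw [← h0]
      positivity
    · rw [le_div_iff₀ hzim]
      nlinarith [h2, h0]
  -- the vector u t
  set u : ℝ → lp (fun _ : ℤ => ℂ) 2 := fun t => Rt t (δ y) with hu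
  have hunorm : ∀ t : ℝ, ‖u t‖ ≤ 1 / |z.im| := by
    intro t
    simpa [hnormδ] using hres t (δ y)
  have hequ : ∀ t : ℝ, H (u t) + ((t : ℂ) * (u t) 0) • δ 0 - z • u t = δ y := by
    intro t
    have h := congrArg (fun T : lp (fun _ : ℤ => ℂ) 2 →L[ℂ] lp (fun _ : ℤ => ℂ) 2 => T (δ y))
      (hRt₁ t)
    simp only [ContinuousLinearMap.comp_apply, ContinuousLinearMap.sub_apply,
      ContinuousLinearMap.smul_apply, ContinuousLinearMap.one_apply] at h
    rw [hHtu t] at h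
    exact h
  -- delta coordinates
  have hδval : ∀ k j : ℤ, (δ k) j = if j = k then 1 else 0 := by
    intro k j
    rw [hδ]
    rcases eq_or_ne j k with rfl | h
    · simp [lp.single_apply_self]
    · simp [lp.single_apply_ne _ _ _ h, h]
  -- coordinate form of the equation
  have hcoord : ∀ (t : ℝ) (k : ℤ),
      (H (u t)) k + ((t : ℂ) * (u t) 0) * (δ 0) k - z * (u t) k = (δ y) k := by
    intro t k
    have h := congrArg (fun w : lp (fun _ : ℤ => ℂ) 2 => w k) (hequ t)
    exact h
  -- bound on coordinates of lp elements
  have hcoordb : ∀ (w : lp (fun _ : ℤ => ℂ) 2) (k : ℤ), ‖w k‖ ≤ ‖w‖ := by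
    intro w k
    exact lp.norm_apply_le_norm (by norm_num) w k
  -- bound on t * u t 0
  set M : ℝ := 1 + (‖H‖ + ‖z‖) / |z.im| with hM
  have hMb : ∀ t : ℝ, ‖(t : ℂ) * (u t) 0‖ ≤ M := by
    intro t
    have h := hcoord t 0
    rw [hδval 0 0] at h
    norm_num at h
    have h' : (t : ℂ) * (u t) 0 = (δ y) 0 - (H (u t)) 0 + z * (u t) 0 := by
      linear_combination h
    rw [h']
    have b1 : ‖(δ y) 0‖ ≤ 1 := by
      rw [hδval]
      split_ifs <;> simp
    have b2 : ‖(H (u t)) 0‖ ≤ ‖H‖ / |z.im| := by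
      calc ‖(H (u t)) 0‖ ≤ ‖H (u t)‖ := hcoordb _ _
        _ ≤ ‖H‖ * ‖u t‖ := H.le_opNorm _
        _ ≤ ‖H‖ * (1 / |z.im|) := by
            exact mul_le_mul_of_nonneg_left (hunorm t) (norm_nonneg _)
        _ = ‖H‖ / |z.im| := by ring
    have b3 : ‖z * (u t) 0‖ ≤ ‖z‖ / |z.im| := by
      rw [norm_mul]
      calc ‖z‖ * ‖(u t) 0‖ ≤ ‖z‖ * ‖u t‖ :=
            mul_le_mul_of_nonneg_left (hcoordb _ _) (norm_nonneg _)
        _ ≤ ‖z‖ * (1 / |z.im|) := mul_le_mul_of_nonneg_left (hunorm t) (norm_nonneg _)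
        _ = ‖z‖ / |z.im| := by ring
    calc ‖(δ y) 0 - (H (u t)) 0 + z * (u t) 0‖
        ≤ ‖(δ y) 0 - (H (u t)) 0‖ + ‖z * (u t) 0‖ := norm_add_le _ _
      _ ≤ (‖(δ y) 0‖ + ‖(H (u t)) 0‖) + ‖z * (u t) 0‖ := by
          have := norm_sub_le ((δ y) 0) ((H (u t)) 0)
          linarith
      _ ≤ (1 + ‖H‖ / |z.im|) + ‖z‖ / |z.im| := by linarith
      _ = M := by rw [hM]; ring
  -- u t 0 → 0
  have h0tend : Tendsto (fun t : ℝ => ‖(u t) 0‖) atTop (nhds 0) := by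
    have hg : Tendsto (fun t : ℝ => M / t) atTop (nhds 0) :=
      tendsto_const_nhds.div_atTop tendsto_id
    apply squeeze_zero' (Eventually.of_forall fun t => norm_nonneg _) ?_ hg
    filter_upwards [eventually_ge_atTop (1 : ℝ)] with t ht
    have ht0 : (0 : ℝ) < t := lt_of_lt_of_le one_pos ht
    rw [le_div_iff₀ ht0]
    have : ‖(u t) 0‖ * t = ‖(t : ℂ) * (u t) 0‖ := by
      rw [norm_mul, Complex.norm_real, Real.norm_eq_abs, abs_of_pos ht0]
      ring
    rw [this]
    exact hMb t
  have h0tend' : Tendsto (fun t : ℝ => (u t) 0) atTop (nhds 0) := by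
    rw [tendsto_zero_iff_norm_tendsto_zero]
    exact h0tend
  -- the main coordinate limit
  have hmain : Tendsto (fun t : ℝ => (u t) x) atTop (nhds 0) := by
    rcases eq_or_lt_of_le hx with h0 | hx1
    · rw [← h0] at *
      exact h0tend'
    · have hx1 : (1 : ℤ) ≤ x := hx1
      -- key estimate via truncation
      have hkey : ∀ t : ℝ, ‖(u t) x‖ ^ 2 ≤ ‖(u t) 0‖ / z.im ^ 2 := by
        intro t
        have hvmem : Memℓp (fun k : ℤ => if 1 ≤ k then (u t) k else 0) 2 := by
          apply memℓp_gen
          apply Summable.of_nonneg_of_le (fun k => ?_) (fun k => ?_)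
            ((lp.memℓp (u t)).summable (p := 2) (by norm_num))
          · positivity
          · by_cases h : (1 : ℤ) ≤ k
            · simp [h]
            · simp only [h, if_false, norm_zero]
              rw [Real.zero_rpow (by norm_num)]
              positivity
        set v : lp (fun _ : ℤ => ℂ) 2 := ⟨fun k : ℤ => if 1 ≤ k then (u t) k else 0, hvmem⟩
          with hv
        have hvk : ∀ k : ℤ, v k = if 1 ≤ k then (u t) k else 0 := fun _ => rfl
        have hv0 : v 0 = 0 := by rw [hvk]; norm_num
        have hvy : v y = 0 := by rw [hvk]; rw [if_neg (by omega)]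
        -- inner ℂ product with the equation
        have hA : (inner ℂ v (H (u t)) : ℂ) = z * (inner ℂ v (u t) : ℂ) := by
          have h := congrArg (fun w : lp (fun _ : ℤ => ℂ) 2 => (inner ℂ v w : ℂ)) (hequ t)
          simp only [inner_sub_right, inner_add_right, inner_smul_right] at h
          rw [hpairR 0 v, hpairR y v, hv0, hvy] at h
          simp only [map_zero, mul_zero, add_zero] at h
          linear_combination h
        -- inner ℂ v (u t) = ‖v‖²
        have hvu : (inner ℂ v (u t) : ℂ) = (inner ℂ v v : ℂ) := by
          rw [inner_eq_tsum', inner_eq_tsum']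
          apply tsum_congr
          intro k
          by_cases h : (1 : ℤ) ≤ k
          · rw [hvk k, if_pos h]
          · rw [hvk k, if_neg h]
            simp
        -- inner ℂ v (H u) = inner ℂ v (H v) - conj (u 1) * u 0
        have hdiff : (inner ℂ v (H (u t)) : ℂ)
            = (inner ℂ v (H v) : ℂ) - (starRingEnd ℂ) ((u t) 1) * (u t) 0 := by
          rw [inner_eq_tsum', inner_eq_tsum']
          have hsummand : ∀ k : ℤ, (starRingEnd ℂ) (v k) * (H (u t)) k
              = (starRingEnd ℂ) (v k) * (H v) k
                - (if k = 1 then (starRingEnd ℂ) ((u t) 1) * (u t) 0 else 0) := by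
            intro k
            rw [hH (u t) k, hH v k]
            by_cases h1 : (1 : ℤ) ≤ k
            · by_cases h2 : k = 1
              · subst h2
                simp only [hvk]
                norm_num
                ring
              · have h3 : (1 : ℤ) ≤ k - 1 := by omega
                have h4 : (1 : ℤ) ≤ k + 1 := by omega
                rw [hvk k, hvk (k + 1), hvk (k - 1), if_pos h1, if_pos h3, if_pos h4,
                  if_neg h2]
                ring
            · have h2 : k ≠ 1 := by omega
              rw [hvk k, if_neg h1, if_neg h2]
              simp
          rw [tsum_congr hsummand,
            Summable.tsum_sub (summable_conj_mul v (H v))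
              (summable_of_ne_finset_zero (s := {(1 : ℤ)}) (fun k hk => by
                simp only [Finset.mem_singleton] at hk
                rw [if_neg hk])),
            tsum_ite_eq]
        -- combine
        have heq2 : (inner ℂ v (H v) : ℂ) - (starRingEnd ℂ) ((u t) 1) * (u t) 0
            = z * (inner ℂ v v : ℂ) := by
          rw [← hdiff, hA, hvu]
        have him0 := im_inner_H_zero V H hH v
        have himeq : -(((starRingEnd ℂ) ((u t) 1)) * (u t) 0).im = z.im * ‖v‖ ^ 2 := by
          have h := congrArg Complex.im heq2
          have h3 : (z * (inner ℂ v v : ℂ)).im = z.im * ‖v‖ ^ 2 := by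
            rw [inner_self_eq_norm_sq_to_K]
            simp [Complex.mul_im, ← Complex.ofReal_pow, Complex.ofReal_im,
              Complex.ofReal_re]
          rw [Complex.sub_im, him0, h3] at h
          linarith
        have hb1 : |z.im| * ‖v‖ ^ 2 ≤ ‖(u t) 1‖ * ‖(u t) 0‖ := by
          have e1 : |z.im| * ‖v‖ ^ 2 = |z.im * ‖v‖ ^ 2| := by
            rw [abs_mul]
            congr 1
            exact (_root_.abs_of_nonneg (sq_nonneg _)).symm
          rw [e1, ← himeq, abs_neg]
          calc |(((starRingEnd ℂ) ((u t) 1)) * (u t) 0).im|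
              ≤ ‖((starRingEnd ℂ) ((u t) 1)) * (u t) 0‖ :=
                Complex.abs_im_le_norm _
            _ = ‖((starRingEnd ℂ) ((u t) 1)) * (u t) 0‖ := rfl
            _ = ‖(u t) 1‖ * ‖(u t) 0‖ := by rw [norm_mul, RCLike.norm_conj]
        have hb2 : ‖(u t) 1‖ ≤ 1 / |z.im| := le_trans (hcoordb _ _) (hunorm t)
        have hb3 : ‖v‖ ^ 2 ≤ ‖(u t) 0‖ / z.im ^ 2 := by
          have hz2 : (0 : ℝ) < z.im ^ 2 := by
            have := sq_abs z.im
            nlinarith [hzim]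
          rw [le_div_iff₀ hz2]
          have h5 : ‖(u t) 1‖ * ‖(u t) 0‖ ≤ 1 / |z.im| * ‖(u t) 0‖ :=
            mul_le_mul_of_nonneg_right hb2 (norm_nonneg _)
          have h6 : |z.im| * ‖v‖ ^ 2 ≤ 1 / |z.im| * ‖(u t) 0‖ := le_trans hb1 h5
          have h7 : |z.im| * (|z.im| * ‖v‖ ^ 2) ≤ |z.im| * (1 / |z.im| * ‖(u t) 0‖) :=
            mul_le_mul_of_nonneg_left h6 (abs_nonneg _)
          have h8 : |z.im| * (1 / |z.im| * ‖(u t) 0‖) = ‖(u t) 0‖ := by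
            field_simp
          have h9 : |z.im| * (|z.im| * ‖v‖ ^ 2) = z.im ^ 2 * ‖v‖ ^ 2 := by
            calc |z.im| * (|z.im| * ‖v‖ ^ 2) = |z.im| ^ 2 * ‖v‖ ^ 2 := by ring
              _ = z.im ^ 2 * ‖v‖ ^ 2 := by rw [sq_abs]
          rw [h8, h9] at h7
          linarith
        have hb4 : ‖(u t) x‖ ≤ ‖v‖ := by
          have : v x = (u t) x := by rw [hvk, if_pos hx1]
          rw [← this]
          exact hcoordb v x
        calc ‖(u t) x‖ ^ 2 ≤ ‖v‖ ^ 2 := by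
              apply pow_le_pow_left₀ (norm_nonneg _) hb4
          _ ≤ ‖(u t) 0‖ / z.im ^ 2 := hb3
      -- squeeze
      have hBtend : Tendsto (fun t : ℝ => Real.sqrt (‖(u t) 0‖ / z.im ^ 2)) atTop (nhds 0) := by
        have h1 : Tendsto (fun t : ℝ => ‖(u t) 0‖ / z.im ^ 2) atTop (nhds 0) := by
          simpa using h0tend.div_const (z.im ^ 2)
        have h2 := (Real.continuous_sqrt.tendsto 0).comp h1
        rw [Function.comp_def, Real.sqrt_zero] at h2
        exact h2
      rw [tendsto_zero_iff_norm_tendsto_zero]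
      apply squeeze_zero (fun t => norm_nonneg _) (fun t => ?_) hBtend
      have := hkey t
      calc ‖(u t) x‖ = Real.sqrt (‖(u t) x‖ ^ 2) := by
            rw [Real.sqrt_sq (norm_nonneg _)]
        _ ≤ Real.sqrt (‖(u t) 0‖ / z.im ^ 2) := Real.sqrt_le_sqrt this
  -- conclude
  have hG : ∀ t : ℝ, Gt t x y = (u t) x := by
    intro t
    rw [hGt, hpairL]
  simpa [hG] using hmain
end
end
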